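/- For every natural number k ≥ 4 and every real number r > 1, one has r^(k-1) - r > 0 and r^k/(r^(k-1) - r) ≥ (k-1)^((k-1)/(k-2)) / (k-2). Moreover, equality holds at r = (k-1)^(1/(k-2)): this value of r is greater than 1 and satisfies r^k/(r^(k-1) - r) = (k-1)^((k-1)/(k-2)) / (k-2). -/

import Mathlib

theorem stmt_4 (k : ℕ) (hk : 4 ≤ k) :
    (∀ r : ℝ, 1 < r →
        r ^ (k - 1) - r > 0 ∧
          r ^ k / (r ^ (k - 1) - r) ≥
            ((k : ℝ) - 1) ^ (((k : ℝ) - 1) / ((k : ℝ) - 2)) / ((k : ℝ) - 2)) ∧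
      1 < ((k : ℝ) - 1) ^ (1 / ((k : ℝ) - 2)) ∧
      (((k : ℝ) - 1) ^ (1 / ((k : ℝ) - 2))) ^ k /
          ((((k : ℝ) - 1) ^ (1 / ((k : ℝ) - 2))) ^ (k - 1) -
            ((k : ℝ) - 1) ^ (1 / ((k : ℝ) - 2))) =
        ((k : ℝ) - 1) ^ (((k : ℝ) - 1) / ((k : ℝ) - 2)) / ((k : ℝ) - 2) := by
  have hk4 : (4:ℝ) ≤ (k:ℝ) := by exact_mod_cast hk
  have h2 : (0:ℝ) < (k:ℝ) - 2 := by linarith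
  have h1' : (1:ℝ) < (k:ℝ) - 1 := by linarith
  have h1 : (0:ℝ) < (k:ℝ) - 1 := by linarith
  have hcast2 : ((k - 2 : ℕ) : ℝ) = (k:ℝ) - 2 := by
    have : (2:ℕ) ≤ k := by omega
    push_cast [this]; ring
  have hcast1 : ((k - 1 : ℕ) : ℝ) = (k:ℝ) - 1 := by
    have : (1:ℕ) ≤ k := by omega
    push_cast [this]; ring
  set α : ℝ := ((k:ℝ) - 1) / ((k:ℝ) - 2) with hα
  have hkexp : ((k:ℝ) - 1) ^ α = ((k:ℝ) - 1) * ((k:ℝ) - 1) ^ (1 / ((k:ℝ) - 2)) := by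
    have hα1 : α = 1 + 1 / ((k:ℝ) - 2) := by rw [hα]; field_simp; ring
    rw [hα1, Real.rpow_add h1, Real.rpow_one]
  refine ⟨?_, ?_, ?_⟩
  · intro r hr
    have hr0 : 0 < r := lt_trans one_pos hr
    have hx : 1 < r ^ (k - 2) := one_lt_pow₀ hr (by omega)
    have hsplit1 : r ^ (k - 1) = r ^ (k - 2) * r := by
      rw [← pow_succ]; congr 1; omega
    have hsplitk : r ^ k = r ^ (k - 1) * r := by
      rw [← pow_succ]; congr 1; omega
    have hden : 0 < r ^ (k - 1) - r := by rw [hsplit1]; nlinarith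
    refine ⟨hden, ?_⟩
    set B : ℝ := ((k:ℝ) - 1) ^ α with hB
    have hB0 : 0 < B := Real.rpow_pos_of_pos h1 _
    have amgm := Real.geom_mean_le_arith_mean2_weighted
      (w₁ := ((k:ℝ) - 2)/((k:ℝ) - 1)) (w₂ := 1/((k:ℝ) - 1))
      (p₁ := (r ^ (k - 2)) ^ α) (p₂ := B)
      (by positivity) (by positivity) (by positivity) hB0.le
      (by field_simp; ring)
    have hA : ((r:ℝ) ^ (k - 2)) ^ α = r ^ (k - 1) := by
      rw [← Real.rpow_natCast r (k - 2), hcast2, ← Real.rpow_mul hr0.le,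
        show ((k:ℝ) - 2) * α = (k:ℝ) - 1 by rw [hα]; field_simp,
        ← hcast1, Real.rpow_natCast]
    have hgm : ((r ^ (k - 2) : ℝ) ^ α) ^ (((k:ℝ) - 2)/((k:ℝ) - 1)) *
        B ^ (1/((k:ℝ) - 1)) = r ^ (k - 2) * ((k:ℝ) - 1) ^ (1 / ((k:ℝ) - 2)) := by
      have hxpos : (0:ℝ) < r ^ (k - 2) := by positivity
      rw [← Real.rpow_mul hxpos.le,
        show α * (((k:ℝ) - 2)/((k:ℝ) - 1)) = 1 by rw [hα]; field_simp, Real.rpow_one,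
        hB, ← Real.rpow_mul h1.le,
        show α * (1/((k:ℝ) - 1)) = 1 / ((k:ℝ) - 2) by rw [hα]; field_simp]
    rw [hgm, hA] at amgm
    have e1 : ((k:ℝ) - 1) * (((k:ℝ) - 2)/((k:ℝ) - 1) * r ^ (k - 1) + 1/((k:ℝ) - 1) * B)
        = ((k:ℝ) - 2) * r ^ (k - 1) + B := by field_simp
    have e2 : ((k:ℝ) - 1) * (r ^ (k - 2) * ((k:ℝ) - 1) ^ (1 / ((k:ℝ) - 2)))
        = B * r ^ (k - 2) := by rw [hkexp]; ring
    have hm := mul_le_mul_of_nonneg_left amgm h1.le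
    rw [e1, e2] at hm
    have key : B * (r ^ (k - 2) - 1) ≤ ((k:ℝ) - 2) * r ^ (k - 1) := by linarith
    rw [ge_iff_le, div_le_div_iff₀ h2 hden, hsplit1, hsplitk]
    nlinarith [mul_le_mul_of_nonneg_right key hr0.le]
  · exact (Real.one_lt_rpow_iff_of_pos h1).mpr (Or.inl ⟨h1', by positivity⟩)
  · set s : ℝ := ((k:ℝ) - 1) ^ (1 / ((k:ℝ) - 2)) with hs
    have hs0 : 0 < s := Real.rpow_pos_of_pos h1 _
    have hpow2 : s ^ (k - 2) = (k:ℝ) - 1 := by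
      rw [hs, ← Real.rpow_natCast _ (k - 2), hcast2, ← Real.rpow_mul h1.le]
      rw [show 1 / ((k:ℝ) - 2) * ((k:ℝ) - 2) = 1 by field_simp, Real.rpow_one]
    have hpow1 : s ^ (k - 1) = ((k:ℝ) - 1) * s := by
      rw [show k - 1 = (k - 2) + 1 by omega, pow_succ, hpow2]
    have hpowk : s ^ k = ((k:ℝ) - 1) * s * s := by
      conv_lhs => rw [show k = (k - 1) + 1 by omega]
      rw [pow_succ, hpow1]
    rw [hpowk, hpow1, hkexp]
    rw [show ((k:ℝ) - 1) * s - s = ((k:ℝ) - 2) * s by ring]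
    rw [div_eq_div_iff (by positivity) h2.ne']
    ring
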